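/- Let a = n(n-1)/(n+1) and b = (n-1)/(n+1) for n ≥ 4. Then the function f(r) = r^a (1-r)^b + r^b (1-r)^a satisfies f''(1/2) > 0; in particular r = 1/2 is not a local maximum of f. -/

import Mathlib

open Set Filter Topology

lemma termDeriv (p q : ℝ) (r : ℝ) (h0 : r ≠ 0) (h1 : (1:ℝ) - r ≠ 0) :
    HasDerivAt (fun r : ℝ => r ^ p * (1 - r) ^ q)
      (p * r ^ (p-1) * (1-r) ^ q - q * (r ^ p * (1-r) ^ (q-1))) r := by
  have hp : HasDerivAt (fun r : ℝ => r ^ p) (p * r ^ (p-1)) r :=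
    Real.hasDerivAt_rpow_const (Or.inl h0)
  have hs : HasDerivAt (fun r : ℝ => 1 - r) (-1) r := by
    simpa using (hasDerivAt_id r).const_sub 1
  have hq : HasDerivAt (fun r : ℝ => (1 - r) ^ q) (-1 * q * (1-r) ^ (q-1)) r :=
    hs.rpow_const (Or.inl h1)
  have := hp.mul hq
  refine this.congr_deriv ?_
  ring

theorem stmt_2 (n : ℕ) (hn : 4 ≤ n) (a b : ℝ)
    (ha : a = (n:ℝ) * ((n:ℝ) - 1) / ((n:ℝ) + 1)) (hb : b = ((n:ℝ) - 1) / ((n:ℝ) + 1))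
    (f : ℝ → ℝ)
    (hf : ∀ r : ℝ, f r = r ^ a * (1 - r) ^ b + r ^ b * (1 - r) ^ a) :
    0 < deriv (deriv f) (1/2) ∧ ¬ IsLocalMax f (1/2) := by
  set g : ℝ → ℝ := fun r =>
      (a * (r ^ (a-1) * (1-r) ^ b) - b * (r ^ a * (1-r) ^ (b-1)))
      + (b * (r ^ (b-1) * (1-r) ^ a) - a * (r ^ b * (1-r) ^ (a-1))) with hgdef
  have hmemI : ∀ r : ℝ, r ∈ Set.Ioo (0:ℝ) 1 → r ≠ 0 ∧ (1:ℝ) - r ≠ 0 := by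
    intro r hr
    constructor
    · exact ne_of_gt hr.1
    · have := hr.2; intro h; linarith [sub_eq_zero.mp h]
  have hfd : ∀ r ∈ Set.Ioo (0:ℝ) 1, HasDerivAt f (g r) r := by
    intro r hr
    obtain ⟨h0, h1⟩ := hmemI r hr
    have H := ((termDeriv a b r h0 h1).add (termDeriv b a r h0 h1)).congr_of_eventuallyEq
      (Filter.Eventually.of_forall hf)
    refine H.congr_deriv ?_
    simp only [hgdef]
    ring
  have h12 : (1/2 : ℝ) ∈ Set.Ioo (0:ℝ) 1 := by norm_num
  have hmem : Set.Ioo (0:ℝ) 1 ∈ 𝓝 (1/2 : ℝ) := isOpen_Ioo.mem_nhds h12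
  have hEq : deriv f =ᶠ[𝓝 (1/2 : ℝ)] g := by
    filter_upwards [hmem] with r hr using (hfd r hr).deriv
  -- derivative of g at 1/2
  obtain ⟨h0, h1⟩ := hmemI (1/2) h12
  have H2 := ((((termDeriv (a-1) b (1/2) h0 h1).const_mul a).sub
      ((termDeriv a (b-1) (1/2) h0 h1).const_mul b)).add
      (((termDeriv (b-1) a (1/2) h0 h1).const_mul b).sub
      ((termDeriv b (a-1) (1/2) h0 h1).const_mul a)))
  have H2' : HasDerivAt g _ (1/2 : ℝ) := H2
  set c : ℝ := (1/2 : ℝ) ^ (a + b - 2) with hc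
  have e : (1:ℝ) - 1/2 = 1/2 := by norm_num
  have key : ∀ x y : ℝ, x + y = a + b - 2 → (1/2:ℝ) ^ x * (1/2:ℝ) ^ y = c := by
    intro x y hxy
    rw [hc, ← hxy, Real.rpow_add (by norm_num)]
  have k1 := key (a-1-1) b (by ring)
  have k2 := key (a-1) (b-1) (by ring)
  have k3 := key a (b-1-1) (by ring)
  have k4 := key (b-1-1) a (by ring)
  have k5 := key (b-1) (a-1) (by ring)
  have k6 := key b (a-1-1) (by ring)
  have hval : deriv (deriv f) (1/2) = 2 * c * ((a-b)^2 - (a+b)) := by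
    rw [hEq.deriv_eq, H2'.deriv, e]
    linear_combination a*(a-1)*k1 - a*b*k2 - b*a*k2 + b*(b-1)*k3 + b*(b-1)*k4
      - b*a*k5 - a*b*k5 + a*(a-1)*k6
  -- positivity of the second derivative
  have hN : (4:ℝ) ≤ (n:ℝ) := by exact_mod_cast hn
  have hN1 : (0:ℝ) < (n:ℝ) + 1 := by linarith
  have hquad : 0 < (a-b)^2 - (a+b) := by
    have hab1 : a + b = (n:ℝ) - 1 := by
      rw [ha, hb]; field_simp
    have hab2 : a - b = ((n:ℝ)-1)^2 / ((n:ℝ)+1) := by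
      rw [ha, hb]; field_simp
    rw [hab1, hab2, div_pow, sub_pos, lt_div_iff₀ (by positivity)]
    nlinarith [hN, sq_nonneg ((n:ℝ) - 4), sq_nonneg ((n:ℝ) - 1)]
  have hcpos : 0 < c := Real.rpow_pos_of_pos (by norm_num) _
  have hpos2 : 0 < deriv (deriv f) (1/2) := by
    rw [hval]; positivity
  refine ⟨hpos2, ?_⟩
  -- f'(1/2) = 0
  have hg0 : g (1/2) = 0 := by
    have c1 : ∀ x y : ℝ, x + y = a + b - 1 →
        (1/2:ℝ) ^ x * (1/2:ℝ) ^ y = (1/2:ℝ) ^ (a+b-1) := by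
      intro x y hxy
      rw [← hxy, Real.rpow_add (by norm_num)]
    have m1 := c1 (a-1) b (by ring)
    have m2 := c1 a (b-1) (by ring)
    have m3 := c1 (b-1) a (by ring)
    have m4 := c1 b (a-1) (by ring)
    simp only [hgdef, e]
    linear_combination a*m1 - b*m2 + b*m3 - a*m4
  have hdf0 : deriv f (1/2) = 0 := by
    rw [(hfd (1/2) h12).deriv, hg0]
  -- deriv f has positive derivative at 1/2
  have hD : HasDerivAt (deriv f) _ (1/2 : ℝ) := H2'.congr_of_eventuallyEq hEq
  have hDpos : (0:ℝ) < 2 * c * ((a-b)^2 - (a+b)) := by positivity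
  have hDval : HasDerivAt (deriv f) (2 * c * ((a-b)^2 - (a+b))) (1/2 : ℝ) := by
    have hV := H2'.deriv
    rw [hEq.deriv_eq] at hval
    rw [← hval, hV]
    exact hD
  -- slope argument: deriv f > 0 on a right neighborhood
  have hslope := hasDerivAt_iff_tendsto_slope.mp hDval
  have hspos : ∀ᶠ y in 𝓝[≠] (1/2 : ℝ), 0 < slope (deriv f) (1/2) y :=
    hslope.eventually (eventually_gt_nhds hDpos)
  have hspos' : ∀ᶠ y in 𝓝[>] (1/2 : ℝ), 0 < slope (deriv f) (1/2) y :=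
    nhdsWithin_mono _ (fun x hx => ne_of_gt hx) hspos
  have hdpos : ∀ᶠ y in 𝓝[>] (1/2 : ℝ), 0 < deriv f y := by
    filter_upwards [hspos', self_mem_nhdsWithin] with y hy1 hy2
    have hy2' : (1/2:ℝ) < y := hy2
    rw [slope_def_field, hdf0] at hy1
    have h' : 0 < (deriv f y - 0) / (y - 1/2) := hy1
    rw [div_pos_iff] at h'
    rcases h' with ⟨h1', _⟩ | ⟨_, h2'⟩
    · linarith
    · linarith
  obtain ⟨u, hu, hsub⟩ := mem_nhdsGT_iff_exists_Ioo_subset.mp hdpos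
  have hu' : (1/2:ℝ) < u := hu
  set m : ℝ := min u 1 with hm
  have hm1 : (1/2:ℝ) < m := lt_min hu' (by norm_num)
  set t : ℝ := (1/2 + m) / 2 with ht
  have ht1 : (1/2:ℝ) < t := by rw [ht]; linarith
  have ht2 : t < m := by rw [ht]; linarith
  have ht3 : t < 1 := lt_of_lt_of_le ht2 (min_le_right u 1)
  have htu : t < u := lt_of_lt_of_le ht2 (min_le_left u 1)
  have hIccsub : Set.Icc (1/2:ℝ) t ⊆ Set.Ioo (0:ℝ) 1 := by
    intro x hx
    exact ⟨by linarith [hx.1], by linarith [hx.2]⟩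
  have hmono : StrictMonoOn f (Set.Icc (1/2:ℝ) t) := by
    apply strictMonoOn_of_deriv_pos (convex_Icc _ _)
    · intro x hx
      exact ((hfd x (hIccsub hx)).differentiableAt.continuousAt).continuousWithinAt
    · intro x hx
      rw [interior_Icc] at hx
      exact hsub ⟨hx.1, lt_trans hx.2 htu⟩
  intro hmax
  have h1' : ∀ᶠ y in 𝓝[>] (1/2:ℝ), f y ≤ f (1/2) := hmax.filter_mono nhdsWithin_le_nhds
  have h2' : ∀ᶠ y in 𝓝[>] (1/2:ℝ), y < t :=
    (eventually_lt_nhds ht1).filter_mono nhdsWithin_le_nhds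
  obtain ⟨y, hy1, hy2, hy3⟩ := (h1'.and (h2'.and self_mem_nhdsWithin)).exists
  have hy3' : (1/2:ℝ) < y := hy3
  have : f (1/2) < f y :=
    hmono ⟨le_refl _, le_of_lt ht1⟩ ⟨le_of_lt hy3', le_of_lt hy2⟩ hy3'
  linarith
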